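/- Let H be a Krein space and T : ℓ²(I) → H a bounded surjective operator. The following are equivalent: (1) there exists a unitary operator U on ℓ²(I) such that the family (TU e_i)_{i∈I} is a J-frame for H; (2) there exists Q ∈ Q such that Q T T* (I − Q)* = 0; (3) there exist bounded operators T₁, T₂ : ℓ²(I) → H with closed ranges such that T = T₁ + T₂, R(T₁) is uniformly J-positive, R(T₂) is uniformly J-negative, and T₁T₂* = T₂T₁* = 0. -/

import Mathlib

/- Frames for Krein spaces ("J-frames"), following Giribet–Maestripieri–Martínez Pería–Massey.

A Krein space is modelled as a complex Hilbert space `H` together with a fundamental symmetry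
`J : H →L[ℂ] H` (selfadjoint, `J ∘L J = 1`); the indefinite inner product is `[x,y] = ⟪J x, y⟫`. -/

noncomputable section

open scoped ComplexInnerProductSpace ComplexOrder
open ContinuousLinearMap

attribute [local instance] Classical.propDecidable

namespace KreinFrames

universe u

variable {H : Type*} [NormedAddCommGroup H] [InnerProductSpace ℂ H]

/-- A subspace `M` is uniformly `J`-positive: `[x,x] ≥ α‖x‖²` on `M` for some `α > 0`. -/
def UnifJPos (J : H →L[ℂ] H) (M : Submodule ℂ H) : Prop :=
  ∃ α : ℝ, 0 < α ∧ ∀ x ∈ M, α * ‖x‖ ^ 2 ≤ (⟪J x, x⟫).re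

/-- A subspace `M` is uniformly `J`-negative: `[x,x] ≤ -α‖x‖²` on `M` for some `α > 0`. -/
def UnifJNeg (J : H →L[ℂ] H) (M : Submodule ℂ H) : Prop :=
  ∃ α : ℝ, 0 < α ∧ ∀ x ∈ M, (⟪J x, x⟫).re ≤ -(α * ‖x‖ ^ 2)

/-- Maximal uniformly `J`-positive subspace. -/
def MaxUnifJPos (J : H →L[ℂ] H) (M : Submodule ℂ H) : Prop :=
  UnifJPos J M ∧ ∀ M' : Submodule ℂ H, UnifJPos J M' → M ≤ M' → M' = M

/-- Maximal uniformly `J`-negative subspace. -/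
def MaxUnifJNeg (J : H →L[ℂ] H) (M : Submodule ℂ H) : Prop :=
  UnifJNeg J M ∧ ∀ M' : Submodule ℂ H, UnifJNeg J M' → M ≤ M' → M' = M

/-- The `J`-orthogonal companion `M^{[⊥]} = {x | [x,m] = 0 ∀ m ∈ M}` of a subspace `M`. -/
def Jorth (J : H →L[ℂ] H) (M : Submodule ℂ H) : Submodule ℂ H where
  carrier := {x | ∀ m ∈ M, ⟪J x, m⟫ = 0}
  zero_mem' := by intro m _; simp
  add_mem' := by
    intro a b ha hb m hm
    rw [map_add, inner_add_left, ha m hm, hb m hm, add_zero]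
  smul_mem' := by
    intro c x hx m hm
    rw [map_smul, inner_smul_left, hx m hm, mul_zero]

/-- `T : ℓ²(I) → H` is the synthesis operator of the family `f`, i.e. `T e_i = f_i`. -/
def IsSynthesis {I : Type*} (f : I → H) (T : lp (fun _ : I => ℂ) 2 →L[ℂ] H) : Prop :=
  ∀ i, T (lp.single 2 i 1) = f i

/-- `f` is a `J`-frame: it is a Bessel family (it admits a bounded synthesis operator `T`),
and the ranges of `T₊ = T P₊` and `T₋ = T P₋` (the synthesis operators of the subfamilies of
`J`-nonnegative and `J`-negative vectors) are maximal uniformly `J`-positive resp. maximal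
uniformly `J`-negative subspaces of `H`. -/
def IsJFrame {I : Type*} (J : H →L[ℂ] H) (f : I → H) : Prop :=
  ∃ T Tp Tm : lp (fun _ : I => ℂ) 2 →L[ℂ] H,
    IsSynthesis f T ∧
    IsSynthesis (fun i => if 0 ≤ (⟪J (f i), f i⟫).re then f i else 0) Tp ∧
    IsSynthesis (fun i => if 0 ≤ (⟪J (f i), f i⟫).re then 0 else f i) Tm ∧
    MaxUnifJPos J (LinearMap.range (Tp : lp (fun _ : I => ℂ) 2 →ₗ[ℂ] H)) ∧ MaxUnifJNeg J (LinearMap.range (Tm : lp (fun _ : I => ℂ) 2 →ₗ[ℂ] H))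

/-- `c₀(M, C)`: supremum of `|⟪m,n⟫|` over unit vectors `m ∈ M` and unit `J`-neutral vectors
`n` (the cone `C = {n | [n,n] = 0}`). -/
def c0 (J : H →L[ℂ] H) (M : Submodule ℂ H) : ℝ :=
  sSup {r : ℝ | ∃ m ∈ M, ∃ n : H, ⟪J n, n⟫ = 0 ∧ ‖m‖ = 1 ∧ ‖n‖ = 1 ∧ r = ‖⟪m, n⟫‖}

/-- Cosine of the Friedrichs angle between two subspaces. -/
def friedrichs (S T : Submodule ℂ H) : ℝ :=
  sSup {r : ℝ | ∃ x ∈ S ⊓ (S ⊓ T)ᗮ, ∃ y ∈ T ⊓ (S ⊓ T)ᗮ, ‖x‖ = 1 ∧ ‖y‖ = 1 ∧ r = ‖⟪x, y⟫‖}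

/-- The reduced minimum modulus `γ(A) = inf {‖Ax‖ : x ∈ N(A)^⊥, ‖x‖ = 1}`. -/
def rmm {E F : Type*} [NormedAddCommGroup E] [InnerProductSpace ℂ E]
    [NormedAddCommGroup F] [InnerProductSpace ℂ F] (A : E →L[ℂ] F) : ℝ :=
  sInf {r : ℝ | ∃ x ∈ (LinearMap.ker (A : E →ₗ[ℂ] F))ᗮ, ‖x‖ = 1 ∧ r = ‖A x‖}

/-- The set `Q` of bounded idempotents with uniformly `J`-positive range and uniformly
`J`-negative kernel. -/
def QSet (J : H →L[ℂ] H) : Set (H →L[ℂ] H) :=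
  {Q | Q ∘L Q = Q ∧ UnifJPos J (LinearMap.range (Q : H →ₗ[ℂ] H)) ∧ UnifJNeg J (LinearMap.ker (Q : H →ₗ[ℂ] H))}

/-- `ℓ²(s)` as a subspace of `ℓ²(I)`, for `s : Set I`. -/
def lpSub {I : Type*} (s : Set I) : Submodule ℂ (lp (fun _ : I => ℂ) 2) where
  carrier := {x | ∀ i ∉ s, x i = 0}
  zero_mem' := by intro i _; simp
  add_mem' := by
    intro a b ha hb i hi
    have h : (↑(a + b) : ∀ _ : I, ℂ) i = a i + b i := by rw [lp.coeFn_add]; rfl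
    rw [h, ha i hi, hb i hi, add_zero]
  smul_mem' := by
    intro c x hx i hi
    have h : (↑(c • x) : ∀ _ : I, ℂ) i = c • (x i : ℂ) := by rw [lp.coeFn_smul]; rfl
    rw [h, hx i hi, smul_zero]

/-- `S` is the `J`-frame operator of some `J`-frame: `S = T T^#` where `T` is the synthesis
operator of a `J`-frame and `T^# = J₂ T* J`. -/
def IsJFrameOperator {H : Type u} [NormedAddCommGroup H] [InnerProductSpace ℂ H]
    [CompleteSpace H] (J S : H →L[ℂ] H) : Prop :=
  ∃ (I : Type u) (f : I → H) (T Tp Tm : lp (fun _ : I => ℂ) 2 →L[ℂ] H)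
    (J2 : lp (fun _ : I => ℂ) 2 →L[ℂ] lp (fun _ : I => ℂ) 2),
    IsSynthesis f T ∧
    IsSynthesis (fun i => if 0 ≤ (⟪J (f i), f i⟫).re then f i else 0) Tp ∧
    IsSynthesis (fun i => if 0 ≤ (⟪J (f i), f i⟫).re then 0 else f i) Tm ∧
    MaxUnifJPos J (LinearMap.range (Tp : lp (fun _ : I => ℂ) 2 →ₗ[ℂ] H)) ∧ MaxUnifJNeg J (LinearMap.range (Tm : lp (fun _ : I => ℂ) 2 →ₗ[ℂ] H)) ∧
    (∀ (x : lp (fun _ : I => ℂ) 2) (i : I),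
      J2 x i = if 0 ≤ (⟪J (f i), f i⟫).re then (x i : ℂ) else -(x i : ℂ)) ∧
    S = T ∘L J2 ∘L adjoint T ∘L J

section Helpers

variable {I : Type*} {H : Type*} [NormedAddCommGroup H] [InnerProductSpace ℂ H]

/-- Two continuous linear maps from `ℓ²(I)` agreeing on the standard vectors agree. -/
lemma ext_of_single {S T : (lp (fun _ : I => ℂ) 2) →L[ℂ] H}
    (h : ∀ i, S (lp.single 2 i 1) = T (lp.single 2 i 1)) : S = T := by
  ext f
  have hf := lp.hasSum_single (by norm_num : (2 : ENNReal) ≠ ⊤) f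
  have key : ∀ i, S (lp.single 2 i (f i)) = T (lp.single 2 i (f i)) := by
    intro i
    have h1 : lp.single (E := fun _ : I => ℂ) 2 i (f i) = (f i : ℂ) • lp.single 2 i (1 : ℂ) := by
      rw [← lp.single_smul]; norm_num
    rw [h1, map_smul, map_smul, h i]
  have h1 : HasSum (fun i => S (lp.single 2 i (f i))) (S f) := hf.mapL S
  have h2 : HasSum (fun i => S (lp.single 2 i (f i))) (T f) :=
    (hf.mapL T).congr_fun key
  exact h1.unique h2

lemma unifJPos_mono {J : H →L[ℂ] H} {M M' : Submodule ℂ H} (h : M' ≤ M) (hM : UnifJPos J M) :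
    UnifJPos J M' := by
  obtain ⟨α, hα, hin⟩ := hM
  exact ⟨α, hα, fun x hx => hin x (h hx)⟩

lemma unifJNeg_mono {J : H →L[ℂ] H} {M M' : Submodule ℂ H} (h : M' ≤ M) (hM : UnifJNeg J M) :
    UnifJNeg J M' := by
  obtain ⟨α, hα, hin⟩ := hM
  exact ⟨α, hα, fun x hx => hin x (h hx)⟩

lemma eq_zero_of_pos_neg {J : H →L[ℂ] H} {M N : Submodule ℂ H} (hM : UnifJPos J M)
    (hN : UnifJNeg J N) {x : H} (hxM : x ∈ M) (hxN : x ∈ N) : x = 0 := by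
  obtain ⟨α, hα, hM⟩ := hM
  obtain ⟨β, hβ, hN⟩ := hN
  have h1 := hM x hxM
  have h2 := hN x hxN
  have h3 : (α + β) * ‖x‖ ^ 2 ≤ 0 := by nlinarith
  have h4 : ‖x‖ ^ 2 ≤ 0 := by nlinarith [sq_nonneg ‖x‖]
  have : ‖x‖ = 0 := by nlinarith [sq_nonneg ‖x‖, norm_nonneg x]
  simpa using this
lemma unifJPos_topologicalClosure {J : H →L[ℂ] H} {M : Submodule ℂ H} (hM : UnifJPos J M) :
    UnifJPos J M.topologicalClosure := by
  obtain ⟨α, hα, hin⟩ := hM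
  refine ⟨α, hα, fun x hx => ?_⟩
  have hcont : Continuous fun x : H => (⟪J x, x⟫).re - α * ‖x‖ ^ 2 := by
    apply Continuous.sub
    · exact Complex.continuous_re.comp (Continuous.inner (J.continuous) continuous_id)
    · exact (continuous_const.mul ((continuous_norm).pow 2))
  have hcl : IsClosed {x : H | α * ‖x‖ ^ 2 ≤ (⟪J x, x⟫).re} := by
    have : {x : H | α * ‖x‖ ^ 2 ≤ (⟪J x, x⟫).re} = (fun x : H => (⟪J x, x⟫).re - α * ‖x‖ ^ 2) ⁻¹' (Set.Ici 0) := by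
      ext x; simp [sub_nonneg]
    rw [this]
    exact IsClosed.preimage hcont isClosed_Ici
  have hsub : (M : Set H) ⊆ {x : H | α * ‖x‖ ^ 2 ≤ (⟪J x, x⟫).re} := fun x hx => hin x hx
  have := hcl.closure_subset_iff.2 hsub
  exact this (by rw [← Submodule.topologicalClosure_coe]; exact hx)

lemma unifJNeg_topologicalClosure {J : H →L[ℂ] H} {M : Submodule ℂ H} (hM : UnifJNeg J M) :
    UnifJNeg J M.topologicalClosure := by
  obtain ⟨α, hα, hin⟩ := hM
  refine ⟨α, hα, fun x hx => ?_⟩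
  have hcont : Continuous fun x : H => -(α * ‖x‖ ^ 2) - (⟪J x, x⟫).re := by
    apply Continuous.sub
    · exact (continuous_const.mul ((continuous_norm).pow 2)).neg
    · exact Complex.continuous_re.comp (Continuous.inner (J.continuous) continuous_id)
  have hcl : IsClosed {x : H | (⟪J x, x⟫).re ≤ -(α * ‖x‖ ^ 2)} := by
    have : {x : H | (⟪J x, x⟫).re ≤ -(α * ‖x‖ ^ 2)} = (fun x : H => -(α * ‖x‖ ^ 2) - (⟪J x, x⟫).re) ⁻¹' (Set.Ici 0) := by
      ext x; simp [sub_nonneg]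
    rw [this]
    exact IsClosed.preimage hcont isClosed_Ici
  have hsub : (M : Set H) ⊆ {x : H | (⟪J x, x⟫).re ≤ -(α * ‖x‖ ^ 2)} := fun x hx => hin x hx
  have := hcl.closure_subset_iff.2 hsub
  exact this (by rw [← Submodule.topologicalClosure_coe]; exact hx)

/-- A uniformly `J`-positive subspace with a uniformly `J`-negative complement is maximal. -/
lemma maxUnifJPos_of_codisjoint {J : H →L[ℂ] H} {M N : Submodule ℂ H} (hM : UnifJPos J M)
    (hN : UnifJNeg J N) (hco : M ⊔ N = ⊤) : MaxUnifJPos J M := by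
  refine ⟨hM, fun M' hM' hle => ?_⟩
  refine le_antisymm (fun x hx => ?_) hle
  have hxmem : x ∈ M ⊔ N := by rw [hco]; trivial
  obtain ⟨m, hm, n, hn, rfl⟩ := Submodule.mem_sup.1 hxmem
  have hnM' : n ∈ M' := by
    have : (m + n) - m ∈ M' := Submodule.sub_mem _ hx (hle hm)
    simpa using this
  have : n = 0 := eq_zero_of_pos_neg hM' hN hnM' hn
  simpa [this] using hm

lemma maxUnifJNeg_of_codisjoint {J : H →L[ℂ] H} {M N : Submodule ℂ H} (hM : UnifJNeg J M)
    (hN : UnifJPos J N) (hco : M ⊔ N = ⊤) : MaxUnifJNeg J M := by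
  refine ⟨hM, fun M' hM' hle => ?_⟩
  refine le_antisymm (fun x hx => ?_) hle
  have hxmem : x ∈ M ⊔ N := by rw [hco]; trivial
  obtain ⟨m, hm, n, hn, rfl⟩ := Submodule.mem_sup.1 hxmem
  have hnM' : n ∈ M' := by
    have : (m + n) - m ∈ M' := Submodule.sub_mem _ hx (hle hm)
    simpa using this
  have : n = 0 := eq_zero_of_pos_neg hN hM' hn hnM'
  simpa [this] using hm
section Proj

variable [CompleteSpace H] {M N : Submodule ℂ H}

/-- The continuous projection onto `M` along `N`. -/
def projCLM (M N : Submodule ℂ H) (h : IsCompl M N) (hM : IsClosed (M : Set H))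
    (hN : IsClosed (N : Set H)) : H →L[ℂ] H :=
  M.subtypeL ∘L M.linearProjOfClosedCompl N h hM hN

lemma projCLM_apply_left (h : IsCompl M N) (hM : IsClosed (M : Set H))
    (hN : IsClosed (N : Set H)) {x : H} (hx : x ∈ M) : projCLM M N h hM hN x = x := by
  have := Submodule.linearProjOfIsCompl_apply_left h ⟨x, hx⟩
  simp only [projCLM, ContinuousLinearMap.comp_apply]
  rw [Submodule.coe_continuous_linearProjOfClosedCompl']
  simp [this]

lemma projCLM_apply_right (h : IsCompl M N) (hM : IsClosed (M : Set H))
    (hN : IsClosed (N : Set H)) {x : H} (hx : x ∈ N) : projCLM M N h hM hN x = 0 := by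
  have := Submodule.linearProjOfIsCompl_apply_right h ⟨x, hx⟩
  simp only [projCLM, ContinuousLinearMap.comp_apply]
  rw [Submodule.coe_continuous_linearProjOfClosedCompl']
  simp [this]

lemma projCLM_mem (h : IsCompl M N) (hM : IsClosed (M : Set H))
    (hN : IsClosed (N : Set H)) (x : H) : projCLM M N h hM hN x ∈ M := by
  simp only [projCLM, ContinuousLinearMap.comp_apply]
  exact (M.linearProjOfClosedCompl N h hM hN x).2

lemma projCLM_idem (h : IsCompl M N) (hM : IsClosed (M : Set H))
    (hN : IsClosed (N : Set H)) :
    projCLM M N h hM hN ∘L projCLM M N h hM hN = projCLM M N h hM hN := by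
  ext x
  exact projCLM_apply_left h hM hN (projCLM_mem h hM hN x)

lemma projCLM_range (h : IsCompl M N) (hM : IsClosed (M : Set H))
    (hN : IsClosed (N : Set H)) : LinearMap.range (projCLM M N h hM hN : H →ₗ[ℂ] H) = M := by
  apply le_antisymm
  · rintro _ ⟨x, rfl⟩; exact projCLM_mem h hM hN x
  · intro x hx; exact ⟨x, projCLM_apply_left h hM hN hx⟩

lemma projCLM_sub_mem (h : IsCompl M N) (hM : IsClosed (M : Set H))
    (hN : IsClosed (N : Set H)) (x : H) : x - projCLM M N h hM hN x ∈ N := by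
  obtain ⟨m, hm, n, hn, rfl⟩ := Submodule.mem_sup.1 (by rw [h.sup_eq_top]; trivial :
    x ∈ M ⊔ N)
  have : projCLM M N h hM hN (m + n) = m := by
    rw [map_add, projCLM_apply_left h hM hN hm, projCLM_apply_right h hM hN hn, add_zero]
  rw [this]; simpa using hn

lemma projCLM_ker (h : IsCompl M N) (hM : IsClosed (M : Set H))
    (hN : IsClosed (N : Set H)) : LinearMap.ker (projCLM M N h hM hN : H →ₗ[ℂ] H) = N := by
  apply le_antisymm
  · intro x hx
    have h1 : x - projCLM M N h hM hN x ∈ N := projCLM_sub_mem h hM hN x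
    rw [LinearMap.mem_ker, ContinuousLinearMap.coe_coe] at hx
    simpa [hx] using h1
  · intro x hx; exact projCLM_apply_right h hM hN hx

end Proj
section Part2

variable [CompleteSpace H] {J : H →L[ℂ] H}

lemma range_eq_ker_of_idem {Q : H →L[ℂ] H} (hQ : Q ∘L Q = Q) :
    LinearMap.range (Q : H →ₗ[ℂ] H) = LinearMap.ker ((1 - Q : H →L[ℂ] H) : H →ₗ[ℂ] H) := by
  ext x
  constructor
  · rintro ⟨y, rfl⟩
    have : Q (Q y) = Q y := by
      have := congrArg (fun A : H →L[ℂ] H => A y) hQ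
      simpa using this
    simp [LinearMap.mem_ker, this]
  · intro hx
    rw [LinearMap.mem_ker] at hx
    have : Q x = x := by
      have : x - Q x = 0 := by simpa [sub_apply] using hx
      linear_combination (norm := module) -this
    exact ⟨x, this⟩

lemma ker_eq_range_one_sub_of_idem {Q : H →L[ℂ] H} (hQ : Q ∘L Q = Q) :
    LinearMap.ker (Q : H →ₗ[ℂ] H) = LinearMap.range ((1 - Q : H →L[ℂ] H) : H →ₗ[ℂ] H) := by
  have h1 : (1 - Q) ∘L (1 - Q) = 1 - Q := by
    ext x
    have := congrArg (fun A : H →L[ℂ] H => A x) hQ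
    simp only [comp_apply, sub_apply, one_apply, map_sub] at this ⊢
    simp [this]
  rw [range_eq_ker_of_idem h1]
  congr 1
  abel

theorem part2 (T : lp (fun _ : I => ℂ) 2 →L[ℂ] H) (hsurj : Function.Surjective T) :
    ((∃ Q ∈ QSet J, Q ∘L (T ∘L adjoint T) ∘L adjoint (1 - Q) = 0) ↔
      (∃ T1 T2 : lp (fun _ : I => ℂ) 2 →L[ℂ] H,
        IsClosed (LinearMap.range (T1 : lp (fun _ : I => ℂ) 2 →ₗ[ℂ] H) : Set H) ∧ IsClosed (LinearMap.range (T2 : lp (fun _ : I => ℂ) 2 →ₗ[ℂ] H) : Set H) ∧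
        T = T1 + T2 ∧ UnifJPos J (LinearMap.range (T1 : lp (fun _ : I => ℂ) 2 →ₗ[ℂ] H)) ∧ UnifJNeg J (LinearMap.range (T2 : lp (fun _ : I => ℂ) 2 →ₗ[ℂ] H)) ∧
        T1 ∘L adjoint T2 = 0 ∧ T2 ∘L adjoint T1 = 0)) := by
  constructor
  · rintro ⟨Q, ⟨hQidem, hQpos, hQneg⟩, h0⟩
    have hrc : LinearMap.range (Q ∘L T : lp (fun _ : I => ℂ) 2 →ₗ[ℂ] H) = LinearMap.range (Q : H →ₗ[ℂ] H) := by
      apply le_antisymm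
      · rintro _ ⟨x, rfl⟩; exact ⟨T x, rfl⟩
      · rintro _ ⟨x, rfl⟩
        obtain ⟨y, rfl⟩ := hsurj x
        exact ⟨y, rfl⟩
    have hrc2 : LinearMap.range ((1 - Q) ∘L T : lp (fun _ : I => ℂ) 2 →ₗ[ℂ] H) = LinearMap.range ((1 - Q : H →L[ℂ] H) : H →ₗ[ℂ] H) := by
      apply le_antisymm
      · rintro _ ⟨x, rfl⟩; exact ⟨T x, rfl⟩
      · rintro _ ⟨x, rfl⟩
        obtain ⟨y, rfl⟩ := hsurj x
        exact ⟨y, rfl⟩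
    have hr2k : LinearMap.range ((1 - Q : H →L[ℂ] H) : H →ₗ[ℂ] H) = LinearMap.ker (Q : H →ₗ[ℂ] H) := (ker_eq_range_one_sub_of_idem hQidem).symm
    have hz : (Q ∘L T) ∘L adjoint ((1 - Q) ∘L T) = 0 := by
      rw [adjoint_comp]
      calc (Q ∘L T) ∘L adjoint T ∘L adjoint (1 - Q)
          = Q ∘L (T ∘L adjoint T) ∘L adjoint (1 - Q) := by
            ext x; simp [comp_apply]
        _ = 0 := h0
    refine ⟨Q ∘L T, (1 - Q) ∘L T, ?_, ?_, ?_, ?_, ?_, hz, ?_⟩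
    · rw [hrc, range_eq_ker_of_idem hQidem]
      exact ContinuousLinearMap.isClosed_ker _
    · rw [hrc2, hr2k]
      exact ContinuousLinearMap.isClosed_ker _
    · ext x; simp [comp_apply, sub_apply]
    · rw [hrc]; exact hQpos
    · rw [hrc2, hr2k]; exact hQneg
    · have := congrArg (fun A => ContinuousLinearMap.adjoint A) hz
      simpa [adjoint_comp, adjoint_adjoint] using this
  · rintro ⟨T1, T2, hc1, hc2, hsum, hpos, hneg, h12, h21⟩
    set M := LinearMap.range (T1 : lp (fun _ : I => ℂ) 2 →ₗ[ℂ] H)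
    set N := LinearMap.range (T2 : lp (fun _ : I => ℂ) 2 →ₗ[ℂ] H)
    have hdis : Disjoint M N := by
      rw [Submodule.disjoint_def]
      intro x hxM hxN
      exact eq_zero_of_pos_neg hpos hneg hxM hxN
    have hcod : M ⊔ N = ⊤ := by
      rw [eq_top_iff]
      intro x _
      obtain ⟨y, rfl⟩ := hsurj x
      have : T y = T1 y + T2 y := by rw [hsum]; simp
      rw [this]
      exact Submodule.add_mem _ (Submodule.mem_sup_left ⟨y, rfl⟩)
        (Submodule.mem_sup_right ⟨y, rfl⟩)
    have hcompl : IsCompl M N := ⟨hdis, codisjoint_iff.2 hcod⟩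
    set Q := projCLM M N hcompl hc1 hc2 with hQdef
    have hQT1 : Q ∘L T = T1 := by
      ext x
      have hx : T x = T1 x + T2 x := by rw [hsum]; simp
      simp only [comp_apply, hx, map_add]
      rw [projCLM_apply_left hcompl hc1 hc2 (x := T1 x) ⟨x, rfl⟩,
        projCLM_apply_right hcompl hc1 hc2 (x := T2 x) ⟨x, rfl⟩, add_zero]
    have hQT2 : (1 - Q) ∘L T = T2 := by
      ext x
      have hx : T x = T1 x + T2 x := by rw [hsum]; simp
      have h1 : Q (T x) = T1 x := by
        have := congrArg (fun A : lp (fun _ : I => ℂ) 2 →L[ℂ] H => A x) hQT1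
        simpa using this
      simp only [comp_apply, sub_apply, ContinuousLinearMap.one_apply]
      rw [h1, hx]
      abel
    refine ⟨Q, ⟨projCLM_idem hcompl hc1 hc2, ?_, ?_⟩, ?_⟩
    · rw [projCLM_range hcompl hc1 hc2]; exact hpos
    · rw [projCLM_ker hcompl hc1 hc2]; exact hneg
    · calc Q ∘L (T ∘L adjoint T) ∘L adjoint (1 - Q)
          = (Q ∘L T) ∘L adjoint ((1 - Q) ∘L T) := by
            rw [adjoint_comp]; ext x; simp [comp_apply]
        _ = T1 ∘L adjoint T2 := by rw [hQT1, hQT2]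
        _ = 0 := h12

end Part2
section Part1Fwd

variable [CompleteSpace H] {J : H →L[ℂ] H}

lemma adjoint_coord (A : lp (fun _ : I => ℂ) 2 →L[ℂ] H) (z : H) (i : I) :
    (adjoint A z : ∀ _ : I, ℂ) i = ⟪A (lp.single 2 i 1), z⟫ := by
  have h1 : ⟪lp.single 2 i (1 : ℂ), adjoint A z⟫ = ⟪(1 : ℂ), (adjoint A z : ∀ _ : I, ℂ) i⟫ :=
    lp.inner_single_left i 1 (adjoint A z)
  have h2 : ⟪lp.single 2 i (1 : ℂ), adjoint A z⟫ = ⟪A (lp.single 2 i 1), z⟫ :=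
    ContinuousLinearMap.adjoint_inner_right A _ _
  rw [← h2, h1]
  simp

/-- If two synthesis-type operators have "disjointly supported" families, the composition
`Tp ∘ Tm†` vanishes. -/
lemma comp_adjoint_eq_zero_of_disjoint {Tp Tm : lp (fun _ : I => ℂ) 2 →L[ℂ] H}
    (h : ∀ i, Tp (lp.single 2 i 1) = 0 ∨ Tm (lp.single 2 i 1) = 0) :
    Tp ∘L adjoint Tm = 0 := by
  ext x
  have key : ∀ y : H, ⟪y, Tp (adjoint Tm x)⟫ = 0 := by
    intro y
    have h1 : ⟪y, Tp (adjoint Tm x)⟫ = ⟪adjoint Tp y, adjoint Tm x⟫ := by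
      rw [ContinuousLinearMap.adjoint_inner_left]
    rw [h1, lp.inner_eq_tsum]
    have hz : ∀ i, ⟪(adjoint Tp y : ∀ _ : I, ℂ) i, (adjoint Tm x : ∀ _ : I, ℂ) i⟫ = (0 : ℂ) := by
      intro i
      rcases h i with hi | hi
      · rw [adjoint_coord, hi]
        simp
      · rw [adjoint_coord Tm, hi]
        simp
    calc (∑' i, ⟪(adjoint Tp y : ∀ _ : I, ℂ) i, (adjoint Tm x : ∀ _ : I, ℂ) i⟫)
        = ∑' _ : I, (0 : ℂ) := tsum_congr hz
      _ = 0 := tsum_zero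
  have := key (Tp (adjoint Tm x))
  rw [inner_self_eq_zero] at this
  simpa using this

lemma isClosed_of_maxUnifJPos {M : Submodule ℂ H} (h : MaxUnifJPos J M) :
    IsClosed (M : Set H) := by
  have heq : M.topologicalClosure = M :=
    h.2 _ (unifJPos_topologicalClosure h.1) (Submodule.le_topologicalClosure M)
  have : closure (M : Set H) = (M : Set H) := by
    rw [← M.topologicalClosure_coe, heq]
  exact isClosed_of_closure_subset this.le

lemma isClosed_of_maxUnifJNeg {M : Submodule ℂ H} (h : MaxUnifJNeg J M) :
    IsClosed (M : Set H) := by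
  have heq : M.topologicalClosure = M :=
    h.2 _ (unifJNeg_topologicalClosure h.1) (Submodule.le_topologicalClosure M)
  have : closure (M : Set H) = (M : Set H) := by
    rw [← M.topologicalClosure_coe, heq]
  exact isClosed_of_closure_subset this.le

lemma part1_fwd (T : lp (fun _ : I => ℂ) 2 →L[ℂ] H) (hsurj : Function.Surjective T)
    (U : lp (fun _ : I => ℂ) 2 ≃ₗᵢ[ℂ] lp (fun _ : I => ℂ) 2)
    (hJF : IsJFrame J (fun i => T (U (lp.single 2 i 1)))) :
    ∃ Q ∈ QSet J, Q ∘L (T ∘L adjoint T) ∘L adjoint (1 - Q) = 0 := by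
  obtain ⟨T', Tp, Tm, hT', hTp, hTm, hmaxp, hmaxm⟩ := hJF
  set f : I → H := fun i => T (U (lp.single 2 i 1)) with hf
  -- T' = T ∘L U
  have hT'U : T' = T ∘L (U : lp (fun _ : I => ℂ) 2 →L[ℂ] lp (fun _ : I => ℂ) 2) := by
    apply ext_of_single
    intro i
    rw [hT' i]
    simp [hf]
  have hT'surj : Function.Surjective T' := by
    intro y
    obtain ⟨x, hx⟩ := hsurj y
    refine ⟨U.symm x, ?_⟩
    rw [hT'U]
    simp [hx]
  have hsum : T' = Tp + Tm := by
    apply ext_of_single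
    intro i
    rw [hT' i]
    simp only [ContinuousLinearMap.add_apply, hTp i, hTm i]
    by_cases hi : 0 ≤ (⟪J (f i), f i⟫).re <;> simp [hi]
  have hTpTm : Tp ∘L adjoint Tm = 0 := by
    apply comp_adjoint_eq_zero_of_disjoint
    intro i
    by_cases hi : 0 ≤ (⟪J (f i), f i⟫).re
    · right; rw [hTm i]; simp [hi]
    · left; rw [hTp i]; simp [hi]
  set M := LinearMap.range (Tp : lp (fun _ : I => ℂ) 2 →ₗ[ℂ] H)
  set N := LinearMap.range (Tm : lp (fun _ : I => ℂ) 2 →ₗ[ℂ] H)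
  have hc1 : IsClosed (M : Set H) := isClosed_of_maxUnifJPos hmaxp
  have hc2 : IsClosed (N : Set H) := isClosed_of_maxUnifJNeg hmaxm
  have hdis : Disjoint M N := by
    rw [Submodule.disjoint_def]
    intro x hxM hxN
    exact eq_zero_of_pos_neg hmaxp.1 hmaxm.1 hxM hxN
  have hcod : M ⊔ N = ⊤ := by
    rw [eq_top_iff]
    intro x _
    obtain ⟨y, rfl⟩ := hT'surj x
    have : T' y = Tp y + Tm y := by rw [hsum]; simp
    rw [this]
    exact Submodule.add_mem _ (Submodule.mem_sup_left ⟨y, rfl⟩)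
      (Submodule.mem_sup_right ⟨y, rfl⟩)
  have hcompl : IsCompl M N := ⟨hdis, codisjoint_iff.2 hcod⟩
  set Q := projCLM M N hcompl hc1 hc2 with hQdef
  have hQT1 : Q ∘L T' = Tp := by
    ext x
    have hx : T' x = Tp x + Tm x := by rw [hsum]; simp
    simp only [comp_apply, hx, map_add]
    rw [projCLM_apply_left hcompl hc1 hc2 (x := Tp x) ⟨x, rfl⟩,
      projCLM_apply_right hcompl hc1 hc2 (x := Tm x) ⟨x, rfl⟩, add_zero]
  have hQT2 : (1 - Q) ∘L T' = Tm := by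
    ext x
    have hx : T' x = Tp x + Tm x := by rw [hsum]; simp
    have h1 : Q (T' x) = Tp x := by
      have := congrArg (fun A : lp (fun _ : I => ℂ) 2 →L[ℂ] H => A x) hQT1
      simpa using this
    simp only [comp_apply, sub_apply, ContinuousLinearMap.one_apply]
    rw [h1, hx]
    abel
  have hTT : T ∘L adjoint T = T' ∘L adjoint T' := by
    rw [hT'U, adjoint_comp]
    ext x
    simp [comp_apply]
  refine ⟨Q, ⟨projCLM_idem hcompl hc1 hc2, ?_, ?_⟩, ?_⟩
  · rw [projCLM_range hcompl hc1 hc2]; exact hmaxp.1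
  · rw [projCLM_ker hcompl hc1 hc2]; exact hmaxm.1
  · calc Q ∘L (T ∘L adjoint T) ∘L adjoint (1 - Q)
        = (Q ∘L T') ∘L adjoint ((1 - Q) ∘L T') := by
          rw [hTT, adjoint_comp]; ext x; simp [comp_apply]
      _ = Tp ∘L adjoint Tm := by rw [hQT1, hQT2]
      _ = 0 := hTpTm

end Part1Fwd
section Card

lemma lp_eq_zero_of_coords {x : lp (fun _ : I => ℂ) 2} (h : ∀ i, (x : ∀ _ : I, ℂ) i = 0) :
    x = 0 := by
  apply Subtype.ext
  funext i
  simpa using h i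

lemma std_orthonormal : Orthonormal ℂ (fun i : I => lp.single 2 i (1 : ℂ)) := by
  rw [orthonormal_iff_ite]
  intro i j
  rw [lp.inner_single_left]
  rcases eq_or_ne i j with rfl | hij
  · simp [lp.single_apply_self]
  · rw [lp.single_apply_ne 2 j 1 hij]
    simp [hij]

/-- The standard Hilbert basis of `ℓ²(I)`. -/
def stdHilbertBasis (I : Type*) : HilbertBasis I ℂ (lp (fun _ : I => ℂ) 2) := by
  refine HilbertBasis.mkOfOrthogonalEqBot std_orthonormal ?_
  rw [Submodule.eq_bot_iff]
  intro x hx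
  apply lp_eq_zero_of_coords
  intro i
  have h1 : ⟪lp.single 2 i (1 : ℂ), x⟫ = 0 := by
    rw [Submodule.mem_orthogonal] at hx
    exact hx _ (Submodule.subset_span ⟨i, rfl⟩)
  rwa [lp.inner_single_left, RCLike.inner_apply, map_one, mul_one] at h1

variable {F : Type*} [NormedAddCommGroup F] [InnerProductSpace ℂ F] [CompleteSpace F]

lemma card_le_of_infinite {ι κ : Type v} [Infinite ι] (b : HilbertBasis ι ℂ F)
    (c : HilbertBasis κ ℂ F) : Cardinal.mk κ ≤ Cardinal.mk ι := by
  classical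
  set S : ι → Set κ := fun i => Function.support (fun k => (c.repr (b i) : ∀ _ : κ, ℂ) k) with hS
  have hcount : ∀ i, (S i).Countable := by
    intro i
    have hsum : Summable (fun k => ‖(c.repr (b i) : ∀ _ : κ, ℂ) k‖ ^ (2 : ℝ)) := by
      have := lp.memℓp (c.repr (b i))
      exact this.summable (by norm_num)
    have hsub : S i ⊆ Function.support (fun k => ‖(c.repr (b i) : ∀ _ : κ, ℂ) k‖ ^ (2 : ℝ)) := by
      intro k hk
      simp only [hS, Function.mem_support] at hk ⊢
      have hpos : 0 < ‖(c.repr (b i) : ∀ _ : κ, ℂ) k‖ := norm_pos_iff.2 hk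
      exact ne_of_gt (Real.rpow_pos_of_pos hpos _)
    exact Set.Countable.mono hsub hsum.countable_support
  have hcover : (Set.univ : Set κ) ⊆ ⋃ i, S i := by
    intro k _
    by_contra hk
    simp only [Set.mem_iUnion, hS, Function.mem_support, not_exists, not_not] at hk
    have hrepr : b.repr (c k) = 0 := by
      apply lp_eq_zero_of_coords
      intro i
      have h1 : (b.repr (c k) : ∀ _ : ι, ℂ) i = ⟪b i, c k⟫ := b.repr_apply_apply (c k) i
      have h2 : (c.repr (b i) : ∀ _ : κ, ℂ) k = ⟪c k, b i⟫ := c.repr_apply_apply (b i) k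
      have h3 : ⟪c k, b i⟫ = (0 : ℂ) := by rw [← h2]; exact hk i
      rw [h1, ← inner_conj_symm, h3, map_zero]
    have hnorm : ‖c k‖ = 1 := c.orthonormal.1 k
    have : c k = 0 := by
      have := congrArg norm hrepr
      rw [LinearIsometryEquiv.norm_map] at this
      simpa using this
    rw [this, norm_zero] at hnorm
    norm_num at hnorm
  calc Cardinal.mk κ = Cardinal.mk (Set.univ : Set κ) := Cardinal.mk_univ.symm
    _ ≤ Cardinal.mk (⋃ i, S i) := Cardinal.mk_le_mk_of_subset hcover
    _ ≤ Cardinal.mk ι * ⨆ i, Cardinal.mk (S i) := Cardinal.mk_iUnion_le S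
    _ ≤ Cardinal.mk ι * Cardinal.aleph0 := by
        apply mul_le_mul_right
        apply ciSup_le'
        intro i
        haveI := (hcount i).to_subtype
        exact Cardinal.mk_le_aleph0
    _ = Cardinal.mk ι := Cardinal.mul_aleph0_eq (Cardinal.aleph0_le_mk ι)

lemma span_eq_top_of_finite {ι : Type*} [Finite ι] (b : HilbertBasis ι ℂ F) :
    Submodule.span ℂ (Set.range b) = ⊤ := by
  have hfd : FiniteDimensional ℂ (Submodule.span ℂ (Set.range b)) :=
    FiniteDimensional.span_of_finite ℂ (Set.finite_range b)
  have hcl : IsClosed ((Submodule.span ℂ (Set.range b)) : Set F) :=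
    Submodule.closed_of_finiteDimensional _
  have hd := b.dense_span
  rw [← hd]
  rw [IsClosed.submodule_topologicalClosure_eq hcl]

lemma equiv_of_finite {ι κ : Type*} [Finite ι] (b : HilbertBasis ι ℂ F)
    (c : HilbertBasis κ ℂ F) : Nonempty (ι ≃ κ) := by
  have hspan := span_eq_top_of_finite b
  haveI : FiniteDimensional ℂ F := by
    have hfd : FiniteDimensional ℂ (Submodule.span ℂ (Set.range b)) :=
      FiniteDimensional.span_of_finite ℂ (Set.finite_range b)
    rw [hspan] at hfd
    exact Module.Finite.equiv (Submodule.topEquiv)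
  haveI : Finite κ := c.orthonormal.linearIndependent.finite
  have hspanc := span_eq_top_of_finite c
  exact ⟨Module.Basis.indexEquiv (Module.Basis.mk b.orthonormal.linearIndependent hspan.ge)
    (Module.Basis.mk c.orthonormal.linearIndependent hspanc.ge)⟩

lemma hilbertBasis_index_equiv {ι κ : Type v} (b : HilbertBasis ι ℂ F)
    (c : HilbertBasis κ ℂ F) : Nonempty (ι ≃ κ) := by
  rcases finite_or_infinite ι with hι | hι
  · exact equiv_of_finite b c
  rcases finite_or_infinite κ with hκ | hκ
  · exact (equiv_of_finite c b).map Equiv.symm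
  exact Cardinal.eq.1 (le_antisymm (card_le_of_infinite c b) (card_le_of_infinite b c))

end Card
section Basis2

set_option maxHeartbeats 2000000 in
/-- Given a closed subspace `K` of `ℓ²(I)`, there is a Hilbert basis of `ℓ²(I)` indexed by `I`
each of whose vectors lies in `K` or in `Kᗮ`. -/
lemma exists_hilbertBasis_adapted (K : Submodule ℂ (lp (fun _ : I => ℂ) 2))
    (hK : IsClosed (K : Set (lp (fun _ : I => ℂ) 2))) :
    ∃ b : HilbertBasis I ℂ (lp (fun _ : I => ℂ) 2),
      ∀ i, b i ∈ K ∨ b i ∈ Kᗮ := by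
  classical
  haveI : CompleteSpace K := hK.completeSpace_coe
  obtain ⟨w1, b1, hb1⟩ := exists_hilbertBasis ℂ K
  obtain ⟨w2, b2, hb2⟩ := exists_hilbertBasis ℂ (Kᗮ : Submodule ℂ (lp (fun _ : I => ℂ) 2))
  set u : w1 ⊕ w2 → lp (fun _ : I => ℂ) 2 :=
    Sum.elim (fun a => ((a : K) : lp (fun _ : I => ℂ) 2))
      (fun a => ((a : Kᗮ) : lp (fun _ : I => ℂ) 2)) with hu
  have humem : ∀ s, u s ∈ K ∨ u s ∈ Kᗮ := by
    rintro (a | a)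
    · exact Or.inl (a : K).2
    · exact Or.inr (a : Kᗮ).2
  have hortho : Orthonormal ℂ u := by
    rw [orthonormal_iff_ite]
    rintro (a | a) (a' | a')
    · have := orthonormal_iff_ite.1 b1.orthonormal a a'
      simp only [congrFun hb1 a, congrFun hb1 a'] at this
      simp only [hu, Sum.elim_inl]
      rw [← Submodule.coe_inner]
      simpa using this
    · simp only [hu, Sum.elim_inl, Sum.elim_inr]
      rw [Submodule.inner_right_of_mem_orthogonal (a : K).2 (a' : Kᗮ).2]
      simp
    · simp only [hu, Sum.elim_inl, Sum.elim_inr]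
      rw [inner_eq_zero_symm.2 (Submodule.inner_right_of_mem_orthogonal (a' : K).2 (a : Kᗮ).2)]
      simp
    · have := orthonormal_iff_ite.1 b2.orthonormal a a'
      simp only [congrFun hb2 a, congrFun hb2 a'] at this
      simp only [hu, Sum.elim_inr]
      rw [← Submodule.coe_inner]
      simpa using this
  have hspan : (Submodule.span ℂ (Set.range u))ᗮ = ⊥ := by
    rw [Submodule.eq_bot_iff]
    intro x hx
    rw [Submodule.mem_orthogonal] at hx
    have hx1 : ∀ a : w1, ⟪((a : K) : lp (fun _ : I => ℂ) 2), x⟫ = 0 := fun a =>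
      hx _ (Submodule.subset_span ⟨Sum.inl a, rfl⟩)
    have hx2 : ∀ a : w2, ⟪((a : Kᗮ) : lp (fun _ : I => ℂ) 2), x⟫ = 0 := fun a =>
      hx _ (Submodule.subset_span ⟨Sum.inr a, rfl⟩)
    -- x is orthogonal to K
    have hxK : x ∈ Kᗮ := by
      have hP : (K.orthogonalProjectionOnto x : lp (fun _ : I => ℂ) 2) = 0 := by
        have : b1.repr (K.orthogonalProjectionOnto x) = 0 := by
          apply lp_eq_zero_of_coords
          intro a
          rw [b1.repr_apply_apply]
          simp only [congrFun hb1 a]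
          have hsub : x - (K.orthogonalProjectionOnto x : lp (fun _ : I => ℂ) 2) ∈ Kᗮ := Submodule.sub_starProjection_mem_orthogonal (K := K) x
          have h1 : ⟪((a : K) : lp (fun _ : I => ℂ) 2), x - K.orthogonalProjectionOnto x⟫ = 0 :=
            Submodule.inner_right_of_mem_orthogonal (a : K).2 hsub
          rw [Submodule.coe_inner]
          rw [inner_sub_right] at h1
          rw [hx1 a] at h1
          simp only [zero_sub, neg_eq_zero] at h1
          simpa using h1
        have := congrArg b1.repr.symm this
        rw [LinearIsometryEquiv.symm_apply_apply] at this
        simp only [map_zero] at this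
        rw [this]
        simp
      rw [Submodule.mem_orthogonal]
      intro v hv
      have hdec : x = (x - K.orthogonalProjectionOnto x) + K.orthogonalProjectionOnto x := by abel
      rw [hdec, inner_add_right,
        Submodule.inner_right_of_mem_orthogonal hv (show x - (K.orthogonalProjectionOnto x : lp (fun _ : I => ℂ) 2) ∈ Kᗮ from Submodule.sub_starProjection_mem_orthogonal x),
        hP, inner_zero_right, add_zero]
    -- x is orthogonal to Kᗮ
    have hxKo : x ∈ Kᗮᗮ := by
      have hP : (Kᗮ.orthogonalProjectionOnto x : lp (fun _ : I => ℂ) 2) = 0 := by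
        have : b2.repr (Kᗮ.orthogonalProjectionOnto x) = 0 := by
          apply lp_eq_zero_of_coords
          intro a
          rw [b2.repr_apply_apply]
          simp only [congrFun hb2 a]
          have hsub : x - (Kᗮ.orthogonalProjectionOnto x : lp (fun _ : I => ℂ) 2) ∈ Kᗮᗮ := Submodule.sub_starProjection_mem_orthogonal (K := Kᗮ) x
          have h1 : ⟪((a : Kᗮ) : lp (fun _ : I => ℂ) 2), x - Kᗮ.orthogonalProjectionOnto x⟫ = 0 :=
            Submodule.inner_right_of_mem_orthogonal (a : Kᗮ).2 hsub
          rw [Submodule.coe_inner]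
          rw [inner_sub_right] at h1
          rw [hx2 a] at h1
          simp only [zero_sub, neg_eq_zero] at h1
          simpa using h1
        have := congrArg b2.repr.symm this
        rw [LinearIsometryEquiv.symm_apply_apply] at this
        simp only [map_zero] at this
        rw [this]
        simp
      rw [Submodule.mem_orthogonal]
      intro v hv
      have hdec : x = (x - Kᗮ.orthogonalProjectionOnto x) + Kᗮ.orthogonalProjectionOnto x := by abel
      rw [hdec, inner_add_right,
        Submodule.inner_right_of_mem_orthogonal hv (show x - (Kᗮ.orthogonalProjectionOnto x : lp (fun _ : I => ℂ) 2) ∈ Kᗮᗮ from Submodule.sub_starProjection_mem_orthogonal x),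
        hP, inner_zero_right, add_zero]
    rw [Submodule.orthogonal_orthogonal] at hxKo
    have := Submodule.inner_right_of_mem_orthogonal hxKo hxK
    rwa [inner_self_eq_zero] at this
  have b0 : HilbertBasis (w1 ⊕ w2) ℂ (lp (fun _ : I => ℂ) 2) :=
    HilbertBasis.mkOfOrthogonalEqBot hortho hspan
  obtain ⟨σ⟩ := hilbertBasis_index_equiv (stdHilbertBasis I) b0
  have hortho' : Orthonormal ℂ (u ∘ σ) := hortho.comp σ σ.injective
  have hspan' : (Submodule.span ℂ (Set.range (u ∘ σ)))ᗮ = ⊥ := by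
    rw [Set.range_comp, Equiv.range_eq_univ, Set.image_univ]
    exact hspan
  refine ⟨HilbertBasis.mkOfOrthogonalEqBot hortho' hspan', fun i => ?_⟩
  rw [show (HilbertBasis.mkOfOrthogonalEqBot hortho' hspan') i = (u ∘ σ) i from
    congrFun (HilbertBasis.coe_mkOfOrthogonalEqBot hortho' hspan') i]
  exact humem (σ i)

end Basis2
section Part1Bwd

variable [CompleteSpace H] {J : H →L[ℂ] H}

set_option maxHeartbeats 1000000 in
lemma part1_bwd (T : lp (fun _ : I => ℂ) 2 →L[ℂ] H) (hsurj : Function.Surjective T)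
    (Q : H →L[ℂ] H) (hQ : Q ∈ QSet J)
    (h0 : Q ∘L (T ∘L adjoint T) ∘L adjoint (1 - Q) = 0) :
    ∃ U : lp (fun _ : I => ℂ) 2 ≃ₗᵢ[ℂ] lp (fun _ : I => ℂ) 2,
      IsJFrame J (fun i => T (U (lp.single 2 i 1))) := by
  obtain ⟨hidem, hpos, hneg⟩ := hQ
  set A : lp (fun _ : I => ℂ) 2 →L[ℂ] H := Q ∘L T with hA
  set B : lp (fun _ : I => ℂ) 2 →L[ℂ] H := (1 - Q) ∘L T with hB
  have hAB : A ∘L adjoint B = 0 := by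
    rw [hA, hB, adjoint_comp]
    calc (Q ∘L T) ∘L adjoint T ∘L adjoint (1 - Q)
        = Q ∘L (T ∘L adjoint T) ∘L adjoint (1 - Q) := by ext x; simp [comp_apply]
      _ = 0 := h0
  have hBA : B ∘L adjoint A = 0 := by
    have := congrArg (fun C => ContinuousLinearMap.adjoint C) hAB
    simpa [adjoint_comp, adjoint_adjoint] using this
  set K : Submodule ℂ (lp (fun _ : I => ℂ) 2) := (LinearMap.ker (A : lp (fun _ : I => ℂ) 2 →ₗ[ℂ] H))ᗮ with hKdef
  have hKclosed : IsClosed (K : Set (lp (fun _ : I => ℂ) 2)) := Submodule.isClosed_orthogonal _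
  haveI : CompleteSpace (LinearMap.ker (A : lp (fun _ : I => ℂ) 2 →ₗ[ℂ] H)) :=
    (ContinuousLinearMap.isClosed_ker A).completeSpace_coe
  have hKorth : Kᗮ = LinearMap.ker (A : lp (fun _ : I => ℂ) 2 →ₗ[ℂ] H) := by
    rw [hKdef, Submodule.orthogonal_orthogonal]
  have hkerA : LinearMap.ker (A : lp (fun _ : I => ℂ) 2 →ₗ[ℂ] H) = (LinearMap.range (adjoint A : H →ₗ[ℂ] lp (fun _ : I => ℂ) 2))ᗮ := by
    ext x
    constructor
    · intro hx
      rw [LinearMap.mem_ker, ContinuousLinearMap.coe_coe] at hx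
      rw [Submodule.mem_orthogonal]
      rintro _ ⟨y, rfl⟩
      rw [ContinuousLinearMap.coe_coe, ContinuousLinearMap.adjoint_inner_left, hx, inner_zero_right]
    · intro hx
      rw [Submodule.mem_orthogonal] at hx
      rw [LinearMap.mem_ker]
      have := hx (adjoint A (A x)) ⟨A x, rfl⟩
      rw [ContinuousLinearMap.adjoint_inner_left, inner_self_eq_zero] at this
      exact this
  have hK_kerB : K ≤ LinearMap.ker (B : lp (fun _ : I => ℂ) 2 →ₗ[ℂ] H) := by
    have h1 : LinearMap.range (adjoint A : H →ₗ[ℂ] lp (fun _ : I => ℂ) 2) ≤ LinearMap.ker (B : lp (fun _ : I => ℂ) 2 →ₗ[ℂ] H) := by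
      rintro _ ⟨y, rfl⟩
      rw [LinearMap.mem_ker]
      have := congrArg (fun C : H →L[ℂ] H => C y) hBA
      simpa using this
    rw [hKdef, hkerA, Submodule.orthogonal_orthogonal_eq_closure]
    exact Submodule.topologicalClosure_minimal _ h1 (ContinuousLinearMap.isClosed_ker B)
  -- behaviour of T on K and Kᗮ
  have hP1 : ∀ x ∈ K, Q (T x) = T x := by
    intro x hx
    have hBx : B x = 0 := hK_kerB hx
    have : T x - Q (T x) = 0 := by
      have : ((1 - Q) ∘L T) x = 0 := hBx
      simpa [comp_apply, sub_apply] using this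
    linear_combination (norm := module) -this
  have hP2 : ∀ x ∈ Kᗮ, Q (T x) = 0 := by
    intro x hx
    rw [hKorth] at hx
    exact hx
  obtain ⟨b, hb⟩ := exists_hilbertBasis_adapted K hKclosed
  refine ⟨b.repr.symm, ?_⟩
  set U : lp (fun _ : I => ℂ) 2 ≃ₗᵢ[ℂ] lp (fun _ : I => ℂ) 2 := b.repr.symm with hU
  set f : I → H := fun i => T (U (lp.single 2 i 1)) with hf
  have hUb : ∀ i, U (lp.single 2 i 1) = b i := fun i => rfl
  set T' : lp (fun _ : I => ℂ) 2 →L[ℂ] H :=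
    T ∘L (U : lp (fun _ : I => ℂ) 2 →L[ℂ] lp (fun _ : I => ℂ) 2) with hT'
  have hT'app : ∀ x, T' x = T (U x) := fun x => rfl
  have hT'surj : Function.Surjective T' := by
    intro y
    obtain ⟨x, hx⟩ := hsurj y
    exact ⟨U.symm x, by rw [hT'app]; simp [hx]⟩
  -- key dichotomy for each i
  have hdich : ∀ i, (Q (f i) = f i ∧ 0 ≤ (⟪J (f i), f i⟫).re) ∨
      (Q (f i) = 0 ∧ (f i = 0 ∨ ¬ 0 ≤ (⟪J (f i), f i⟫).re)) := by
    intro i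
    rcases hb i with hmem | hmem
    · left
      have hQf : Q (f i) = f i := by
        rw [hf]
        exact hP1 _ (by rw [← hUb i] at hmem; exact hmem)
      refine ⟨hQf, ?_⟩
      obtain ⟨α, hα, hin⟩ := hpos
      have : f i ∈ LinearMap.range (Q : H →ₗ[ℂ] H) := ⟨f i, hQf⟩
      have h1 := hin _ this
      nlinarith [sq_nonneg ‖f i‖, norm_nonneg (f i), mul_nonneg hα.le (sq_nonneg ‖f i‖)]
    · right
      have hQf : Q (f i) = 0 := by
        rw [hf]
        exact hP2 _ (by rw [← hUb i] at hmem; exact hmem)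
      refine ⟨hQf, ?_⟩
      by_cases hz : f i = 0
      · exact Or.inl hz
      · right
        obtain ⟨α, hα, hin⟩ := hneg
        have : f i ∈ LinearMap.ker (Q : H →ₗ[ℂ] H) := hQf
        have h1 := hin _ this
        have hn : 0 < ‖f i‖ := norm_pos_iff.2 hz
        nlinarith [mul_pos hα (pow_pos hn 2)]
  set Tp : lp (fun _ : I => ℂ) 2 →L[ℂ] H := Q ∘L T' with hTp
  set Tm : lp (fun _ : I => ℂ) 2 →L[ℂ] H := (1 - Q) ∘L T' with hTm
  have hTpapp : ∀ i, Tp (lp.single 2 i 1) = Q (f i) := fun i => rfl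
  have hTmapp : ∀ i, Tm (lp.single 2 i 1) = f i - Q (f i) := by
    intro i
    rw [hTm]
    simp only [comp_apply, sub_apply, one_apply]
    rfl
  have hcod : LinearMap.range (Q : H →ₗ[ℂ] H) ⊔ LinearMap.ker (Q : H →ₗ[ℂ] H) = ⊤ := by
    rw [eq_top_iff]
    intro x _
    have hx : x = Q x + (x - Q x) := by abel
    rw [hx]
    refine Submodule.add_mem _ (Submodule.mem_sup_left ⟨x, rfl⟩) (Submodule.mem_sup_right ?_)
    rw [LinearMap.mem_ker, map_sub, ContinuousLinearMap.coe_coe]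
    have : Q (Q x) = Q x := by
      have := congrArg (fun C : H →L[ℂ] H => C x) hidem
      simpa using this
    rw [this, sub_self]
  have hrangeTp : LinearMap.range (Tp : lp (fun _ : I => ℂ) 2 →ₗ[ℂ] H) = LinearMap.range (Q : H →ₗ[ℂ] H) := by
    apply le_antisymm
    · rintro _ ⟨x, rfl⟩; exact ⟨T' x, rfl⟩
    · rintro _ ⟨x, rfl⟩
      obtain ⟨y, rfl⟩ := hT'surj x
      exact ⟨y, rfl⟩
  have hrangeTm : LinearMap.range (Tm : lp (fun _ : I => ℂ) 2 →ₗ[ℂ] H) = LinearMap.ker (Q : H →ₗ[ℂ] H) := by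
    have h1 : LinearMap.range (Tm : lp (fun _ : I => ℂ) 2 →ₗ[ℂ] H) = LinearMap.range ((1 - Q : H →L[ℂ] H) : H →ₗ[ℂ] H) := by
      apply le_antisymm
      · rintro _ ⟨x, rfl⟩; exact ⟨T' x, rfl⟩
      · rintro _ ⟨x, rfl⟩
        obtain ⟨y, rfl⟩ := hT'surj x
        exact ⟨y, rfl⟩
    rw [h1, ← ker_eq_range_one_sub_of_idem hidem]
  refine ⟨T', Tp, Tm, fun i => rfl, ?_, ?_, ?_, ?_⟩
  · intro i
    rcases hdich i with ⟨hQf, hsign⟩ | ⟨hQf, hrest⟩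
    · rw [hTpapp, hQf]; simp [hsign]
    · rcases hrest with hz | hsign
      · rw [hTpapp, hQf]
        simp [hz]
      · rw [hTpapp, hQf]; simp [hsign]
  · intro i
    rcases hdich i with ⟨hQf, hsign⟩ | ⟨hQf, hrest⟩
    · rw [hTmapp, hQf]; simp [hsign]
    · rcases hrest with hz | hsign
      · rw [hTmapp, hQf]
        simp [hz]
      · rw [hTmapp, hQf]; simp [hsign]
  · rw [hrangeTp]
    exact maxUnifJPos_of_codisjoint hpos hneg hcod
  · rw [hrangeTm]
    exact maxUnifJNeg_of_codisjoint hneg hpos (by rw [sup_comm]; exact hcod)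

end Part1Bwd

end Helpers

/-- characterizations, up to a unitary change of coordinates, of the synthesis
operators of `J`-frames. -/
theorem statement11 {H I : Type*} [NormedAddCommGroup H] [InnerProductSpace ℂ H] [CompleteSpace H]
    (J : H →L[ℂ] H) (hJsa : IsSelfAdjoint J) (hJsq : J ∘L J = 1)
    (T : lp (fun _ : I => ℂ) 2 →L[ℂ] H) (hsurj : Function.Surjective T) :
    ((∃ U : lp (fun _ : I => ℂ) 2 ≃ₗᵢ[ℂ] lp (fun _ : I => ℂ) 2,
        IsJFrame J (fun i => T (U (lp.single 2 i 1)))) ↔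
      (∃ Q ∈ QSet J, Q ∘L (T ∘L adjoint T) ∘L adjoint (1 - Q) = 0)) ∧
    ((∃ Q ∈ QSet J, Q ∘L (T ∘L adjoint T) ∘L adjoint (1 - Q) = 0) ↔
      (∃ T1 T2 : lp (fun _ : I => ℂ) 2 →L[ℂ] H,
        IsClosed (LinearMap.range (T1 : lp (fun _ : I => ℂ) 2 →ₗ[ℂ] H) : Set H) ∧ IsClosed (LinearMap.range (T2 : lp (fun _ : I => ℂ) 2 →ₗ[ℂ] H) : Set H) ∧
        T = T1 + T2 ∧ UnifJPos J (LinearMap.range (T1 : lp (fun _ : I => ℂ) 2 →ₗ[ℂ] H)) ∧ UnifJNeg J (LinearMap.range (T2 : lp (fun _ : I => ℂ) 2 →ₗ[ℂ] H)) ∧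
        T1 ∘L adjoint T2 = 0 ∧ T2 ∘L adjoint T1 = 0)) := by
  refine ⟨⟨?_, ?_⟩, part2 T hsurj⟩
  · rintro ⟨U, hJF⟩
    exact part1_fwd T hsurj U hJF
  · rintro ⟨Q, hQ, h0⟩
    exact part1_bwd T hsurj Q hQ h0


end KreinFrames
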